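/- arXiv:1602.03124 — 3 statements merged into one kernel-verified Lean document; each statement's English description precedes it below -/
import Mathlib

section
/- If M ⊆ {0,1}^V is a co-independent Δ-matroid on a nonempty finite set V, then |M| ≥ 2^{|V|−1}. -/
/-- Flip the values of a Boolean tuple on a finite set of coordinates. -/
def flipS {V : Type*} [DecidableEq V] (α : V → Bool) (S : Finset V) : V → Bool :=
  fun v => if v ∈ S then !(α v) else α v

/-- Flip the value of a Boolean tuple at a single coordinate. -/
def flip1 {V : Type*} [DecidableEq V] (α : V → Bool) (u : V) : V → Bool :=
  flipS α {u}

/-- `M` is a Δ-matroid. -/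
def IsDeltaMatroid {V : Type*} [DecidableEq V] (M : Set (V → Bool)) : Prop :=
  M.Nonempty ∧ ∀ α ∈ M, ∀ β ∈ M, ∀ v, α v ≠ β v →
    ∃ u, α u ≠ β u ∧ flipS α {u, v} ∈ M

/-- Number of ones in a Boolean tuple. -/
def numOnes {V : Type*} [Fintype V] (α : V → Bool) : ℕ :=
  (Finset.univ.filter fun v => α v = true).card

/-- `M` is an even Δ-matroid. -/
def IsEvenDeltaMatroid {V : Type*} [Fintype V] [DecidableEq V] (M : Set (V → Bool)) : Prop :=
  IsDeltaMatroid M ∧ ∀ α ∈ M, ∀ β ∈ M, numOnes α % 2 = numOnes β % 2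

/-- `α` and `β` are even-neighbors with respect to `M`. -/
def EvenNeighbors {V : Type*} [DecidableEq V] (M : Set (V → Bool)) (α β : V → Bool) : Prop :=
  ∃ u v, u ≠ v ∧ β = flip1 (flip1 α u) v ∧ flip1 α u ∉ M

/-- Reachability via chains of even-neighbors inside `M`. -/
def Reachable {V : Type*} [DecidableEq V] (M : Set (V → Bool)) :
    (V → Bool) → (V → Bool) → Prop :=
  Relation.ReflTransGen (fun x y => x ∈ M ∧ y ∈ M ∧ EvenNeighbors M x y)

/-- `M` is coverable. -/
def Coverable {V : Type*} [Fintype V] [DecidableEq V] (M : Set (V → Bool)) : Prop :=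
  ∀ α ∈ M, ∃ Mα : Set (V → Bool),
    IsEvenDeltaMatroid Mα ∧
    (∀ β ∈ M, Reachable M α β → β ∈ Mα) ∧
    (∀ γ ∈ M, Reachable M α γ → ∀ u v,
      flip1 (flip1 γ u) v ∈ Mα → flip1 (flip1 γ u) v ∉ M →
      flip1 γ u ∈ M ∧ flip1 γ v ∈ M)

/-- Direct product of two sets of tuples on disjoint ground sets. -/
def prodSet {U V : Type*} (M : Set (U → Bool)) (N : Set (V → Bool)) :
    Set (U ⊕ V → Bool) :=
  {h | (fun u => h (Sum.inl u)) ∈ M ∧ (fun v => h (Sum.inr v)) ∈ N}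

/-- `M` is an even-zebra Δ-matroid. -/
def IsEvenZebra {V : Type*} [Fintype V] [DecidableEq V] (M : Set (V → Bool)) : Prop :=
  ∀ α ∈ M, ∃ Mα : Set (V → Bool),
    IsEvenDeltaMatroid Mα ∧
    (∀ β ∈ M, numOnes β % 2 = numOnes α % 2 → β ∈ Mα) ∧
    (∀ β ∈ M, ∀ u v, flip1 (flip1 β u) v ∈ Mα → flip1 (flip1 β u) v ∉ M →
      flip1 β u ∈ M ∧ flip1 β v ∈ M)

/-- Identification of two variables of `M`. -/
def identify {U : Type*} [DecidableEq U] (M : Set (U → Bool)) (w₁ w₂ : U) :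
    Set ({x : U // x ≠ w₁ ∧ x ≠ w₂} → Bool) :=
  {g | ∃ β ∈ M, β w₁ = β w₂ ∧ ∀ x : {x : U // x ≠ w₁ ∧ x ≠ w₂}, g x = β x.val}


/-- A Δ-matroid `M` is co-independent if every tuple outside `M` becomes a member of `M`
after flipping any single coordinate. -/
def CoIndependent {V : Type*} [DecidableEq V] (M : Set (V → Bool)) : Prop :=
  ∀ α, α ∉ M → ∀ u, flip1 α u ∈ M

lemma flip1_flip1' {V : Type*} [DecidableEq V] (α : V → Bool) (u : V) :
    flip1 (flip1 α u) u = α := by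
  funext v
  simp [flip1, flipS]
  split <;> simp

/-- A co-independent Δ-matroid on a nonempty finite ground set `V` has at least
`2 ^ (|V| − 1)` tuples. -/
theorem coIndependent_card_ge {V : Type} [Fintype V] [DecidableEq V] [Nonempty V]
    (M : Set (V → Bool)) (hM : IsDeltaMatroid M) (hco : CoIndependent M) :
    2 ^ (Fintype.card V - 1) ≤ M.ncard := by
  obtain ⟨u₀⟩ := ‹Nonempty V›
  have hinj : Set.InjOn (fun α => flip1 α u₀) Mᶜ := by
    intro a _ b _ h
    have := congrArg (fun f => flip1 f u₀) h
    simpa [flip1_flip1'] using this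
  have hsub : (fun α => flip1 α u₀) '' Mᶜ ⊆ M := by
    rintro _ ⟨a, ha, rfl⟩
    exact hco a ha u₀
  have h1 : Mᶜ.ncard ≤ M.ncard := by
    rw [← Set.ncard_image_of_injOn hinj]
    exact Set.ncard_le_ncard hsub (Set.toFinite M)
  have h2 : M.ncard + Mᶜ.ncard = 2 ^ Fintype.card V := by
    rw [Set.ncard_add_ncard_compl]
    simp [Set.ncard_univ, Nat.card_eq_fintype_card]
  have hn : 1 ≤ Fintype.card V := Fintype.card_pos
  have : 2 * 2 ^ (Fintype.card V - 1) = 2 ^ Fintype.card V := by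
    rw [← pow_succ']
    congr 1
    omega
  omega
end

section
/- Let M ⊆ {0,1}^V be an interference-free Δ-matroid and let α, β ∈ M be such that |α △ β| is odd. Then there exists v ∈ α △ β such that α ⊕ v ∈ M. -/
/-- The interference Δ-matroid `{000, 110, 101, 011, 111}`. -/
def InterferenceM : Set (Fin 3 → Bool) :=
  {![false, false, false], ![true, true, false], ![true, false, true],
   ![false, true, true], ![true, true, true]}

/-- The minor of `M` obtained by fixing the variables in `D` to the values given by `ρ`
and deleting them.  (A sequence of single fix-and-delete operations amounts to one such
simultaneous operation.) -/
def minorOf {V : Type*} [DecidableEq V] (M : Set (V → Bool)) (D : Finset V)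
    (ρ : V → Bool) : Set ({x : V // x ∉ D} → Bool) :=
  {g | ∃ α ∈ M, (∀ x ∈ D, α x = ρ x) ∧ ∀ x : {x : V // x ∉ D}, g x = α x.val}

/-- `M` is interference-free: no minor of `M` is isomorphic to the interference
Δ-matroid, where isomorphism allows renaming the variables (the equivalence `e`) and
flipping the values `0` and `1` at some variables (the pattern `s`). -/
def InterferenceFree {V : Type*} [DecidableEq V] (M : Set (V → Bool)) : Prop :=
  ¬ ∃ (D : Finset V) (ρ : V → Bool) (e : Fin 3 ≃ {x : V // x ∉ D}) (s : Fin 3 → Bool),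
      minorOf M D ρ = {g | (fun i => xor (g (e i)) (s i)) ∈ InterferenceM}

set_option linter.unusedVariables false
set_option linter.unusedSectionVars false

section InterferenceAux

/-- Auxiliary: the tuple obtained from `α` by xoring `a, b, c` at `u, v, w`. -/
def pat {V : Type*} [DecidableEq V] (α : V → Bool) (u v w : V) (a b c : Bool) : V → Bool :=
  fun x => if x = u then xor (α x) a else if x = v then xor (α x) b
           else if x = w then xor (α x) c else α x

lemma interference_iff (a b c : Bool) : ![a,b,c] ∈ InterferenceM ↔
    ((a,b,c) = (false,false,false) ∨ (a,b,c)=(true,true,false) ∨ (a,b,c)=(true,false,true) ∨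
     (a,b,c)=(false,true,true) ∨ (a,b,c)=(true,true,true)) := by
  cases a <;> cases b <;> cases c <;>
    simp [InterferenceM, Set.mem_insert_iff, Set.mem_singleton_iff, funext_iff, Fin.forall_fin_succ]

variable {V : Type*} [DecidableEq V]

lemma pat_fffX (α : V → Bool) (u v w : V) :
    pat α u v w false false false = α := by
  funext x; simp [pat]

lemma pat_tffX (α : V → Bool) (u v w : V)
    (huv : u ≠ v) (huw : u ≠ w) (hvw : v ≠ w) :
    pat α u v w true false false = flipS α {u} := by
  funext x
  by_cases h1 : x = u <;> by_cases h2 : x = v <;> by_cases h3 : x = w <;>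
    simp_all [pat, flipS]

lemma pat_ftfX (α : V → Bool) (u v w : V)
    (huv : u ≠ v) (huw : u ≠ w) (hvw : v ≠ w) :
    pat α u v w false true false = flipS α {v} := by
  funext x
  by_cases h1 : x = u <;> by_cases h2 : x = v <;> by_cases h3 : x = w <;>
    simp_all [pat, flipS]

lemma pat_fftX (α : V → Bool) (u v w : V)
    (huv : u ≠ v) (huw : u ≠ w) (hvw : v ≠ w) :
    pat α u v w false false true = flipS α {w} := by
  funext x
  by_cases h1 : x = u <;> by_cases h2 : x = v <;> by_cases h3 : x = w <;>
    simp_all [pat, flipS]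

lemma pat_ttfX (α : V → Bool) (u v w : V)
    (huv : u ≠ v) (huw : u ≠ w) (hvw : v ≠ w) :
    pat α u v w true true false = flipS α {u, v} := by
  funext x
  by_cases h1 : x = u <;> by_cases h2 : x = v <;> by_cases h3 : x = w <;>
    simp_all [pat, flipS]

lemma pat_tttX (α : V → Bool) (u v w : V)
    (huv : u ≠ v) (huw : u ≠ w) (hvw : v ≠ w) :
    pat α u v w true true true = flipS (flipS α {u, v}) {w} := by
  funext x
  by_cases h1 : x = u <;> by_cases h2 : x = v <;> by_cases h3 : x = w <;>
    simp_all [pat, flipS]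

lemma pat_ftt'X (α : V → Bool) (u v w : V)
    (huv : u ≠ v) (huw : u ≠ w) (hvw : v ≠ w) :
    flipS (pat α u v w true true true) {u, u} = pat α u v w false true true := by
  funext x
  by_cases h1 : x = u <;> by_cases h2 : x = v <;> by_cases h3 : x = w <;>
    simp_all [pat, flipS]

lemma pat_fft'X (α : V → Bool) (u v w : V)
    (huv : u ≠ v) (huw : u ≠ w) (hvw : v ≠ w) :
    flipS (pat α u v w true true true) {v, u} = pat α u v w false false true := by
  funext x
  by_cases h1 : x = u <;> by_cases h2 : x = v <;> by_cases h3 : x = w <;>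
    simp_all [pat, flipS]

lemma pat_ftf'X (α : V → Bool) (u v w : V)
    (huv : u ≠ v) (huw : u ≠ w) (hvw : v ≠ w) :
    flipS (pat α u v w true true true) {w, u} = pat α u v w false true false := by
  funext x
  by_cases h1 : x = u <;> by_cases h2 : x = v <;> by_cases h3 : x = w <;>
    simp_all [pat, flipS]

lemma pat_fft''X (α : V → Bool) (u v w : V)
    (huv : u ≠ v) (huw : u ≠ w) (hvw : v ≠ w) :
    flipS (pat α u v w true true true) {u, v} = pat α u v w false false true := by
  funext x
  by_cases h1 : x = u <;> by_cases h2 : x = v <;> by_cases h3 : x = w <;>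
    simp_all [pat, flipS]

lemma pat_tft'X (α : V → Bool) (u v w : V)
    (huv : u ≠ v) (huw : u ≠ w) (hvw : v ≠ w) :
    flipS (pat α u v w true true true) {v, v} = pat α u v w true false true := by
  funext x
  by_cases h1 : x = u <;> by_cases h2 : x = v <;> by_cases h3 : x = w <;>
    simp_all [pat, flipS]

lemma pat_tff'X (α : V → Bool) (u v w : V)
    (huv : u ≠ v) (huw : u ≠ w) (hvw : v ≠ w) :
    flipS (pat α u v w true true true) {w, v} = pat α u v w true false false := by
  funext x
  by_cases h1 : x = u <;> by_cases h2 : x = v <;> by_cases h3 : x = w <;>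
    simp_all [pat, flipS]

end InterferenceAux


lemma interference_minor {V : Type*} [Fintype V] [DecidableEq V] (M : Set (V → Bool))
    (α : V → Bool) (u v w : V) (huv : u ≠ v) (huw : u ≠ w) (hvw : v ≠ w)
    (h : ∀ a b c : Bool, pat α u v w a b c ∈ M ↔ ![a,b,c] ∈ InterferenceM) :
    ¬ InterferenceFree M := by
  intro hIF
  apply hIF
  have pu : u ∉ ({u, v, w} : Finset V)ᶜ := by simp
  have pv : v ∉ ({u, v, w} : Finset V)ᶜ := by simp
  have pw : w ∉ ({u, v, w} : Finset V)ᶜ := by simp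
  refine ⟨({u, v, w} : Finset V)ᶜ, α,
    { toFun := ![⟨u, pu⟩, ⟨v, pv⟩, ⟨w, pw⟩],
      invFun := fun x => if x.1 = u then 0 else if x.1 = v then 1 else 2,
      left_inv := by
        intro i
        fin_cases i <;> simp [huv.symm, huw.symm, hvw.symm, hvw]
      right_inv := by
        rintro ⟨x, hx⟩
        simp only [Finset.mem_compl, not_not, Finset.mem_insert, Finset.mem_singleton] at hx
        rcases hx with rfl | rfl | rfl
        · simp
        · simp [huv.symm]
        · simp [huw.symm, hvw.symm] },
    ![α u, α v, α w], ?_⟩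
  ext g
  simp only [minorOf, Set.mem_setOf_eq, Equiv.coe_fn_mk]
  constructor
  · rintro ⟨β, hβM, hD, hg⟩
    have hβeq : β = pat α u v w (xor (β u) (α u)) (xor (β v) (α v)) (xor (β w) (α w)) := by
      funext x
      by_cases h1 : x = u
      · subst h1; simp [pat]; cases α x <;> cases β x <;> rfl
      · by_cases h2 : x = v
        · subst h2; simp [pat, h1]; cases α x <;> cases β x <;> rfl
        · by_cases h3 : x = w
          · subst h3; simp [pat, h1, h2]; cases α x <;> cases β x <;> rfl
          · have hx : x ∈ ({u, v, w} : Finset V)ᶜ := by simp [h1, h2, h3]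
            simp [pat, h1, h2, h3, hD x hx]
    have hmem := (h _ _ _).mp (hβeq ▸ hβM)
    have : (fun i => xor (g (![⟨u, pu⟩, ⟨v, pv⟩, ⟨w, pw⟩] i)) (![α u, α v, α w] i))
        = ![xor (β u) (α u), xor (β v) (α v), xor (β w) (α w)] := by
      funext i
      fin_cases i <;> simp [hg]
    rw [this]; exact hmem
  · intro hp
    set a := xor (g ⟨u, pu⟩) (α u) with ha
    set b := xor (g ⟨v, pv⟩) (α v) with hb
    set c := xor (g ⟨w, pw⟩) (α w) with hc
    have hmem : ![a, b, c] ∈ InterferenceM := by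
      have : ![a, b, c] = (fun i => xor (g (![⟨u, pu⟩, ⟨v, pv⟩, ⟨w, pw⟩] i)) (![α u, α v, α w] i)) := by
        funext i; fin_cases i <;> simp [ha, hb, hc]
      rw [this]; exact hp
    refine ⟨pat α u v w a b c, (h a b c).mpr hmem, ?_, ?_⟩
    · intro x hx
      simp only [Finset.mem_compl, Finset.mem_insert, Finset.mem_singleton] at hx
      push_neg at hx
      simp [pat, hx.1, hx.2.1, hx.2.2]
    · rintro ⟨x, hx⟩
      simp only [Finset.mem_compl, not_not, Finset.mem_insert, Finset.mem_singleton] at hx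
      rcases hx with rfl | rfl | rfl
      · simp [pat, ha]; cases α x <;> cases g ⟨x, pu⟩ <;> rfl
      · simp [pat, hb, huv.symm]; cases α x <;> cases g ⟨x, pv⟩ <;> rfl
      · simp [pat, hc, huw.symm, hvw.symm]; cases α x <;> cases g ⟨x, pw⟩ <;> rfl

lemma key {V : Type*} [Fintype V] [DecidableEq V] (M : Set (V → Bool)) (hM : IsDeltaMatroid M)
    (hIF : InterferenceFree M) :
    ∀ n : ℕ, ∀ α β : V → Bool, α ∈ M → β ∈ M →
      (Finset.univ.filter fun v => α v ≠ β v).card = n → n % 2 = 1 →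
      ∃ v, α v ≠ β v ∧ flip1 α v ∈ M := by
  intro n
  induction n using Nat.strong_induction_on with
  | _ n ih =>
  intro α β hα hβ hcard hodd
  set S := Finset.univ.filter fun v => α v ≠ β v with hS
  have hSne : S.Nonempty := by
    rw [← Finset.card_pos, hcard]; omega
  obtain ⟨v₀, hv₀S⟩ := hSne
  have hv₀ : α v₀ ≠ β v₀ := by
    have := hv₀S; rw [hS, Finset.mem_filter] at this; exact this.2
  obtain ⟨u₀, hu₀, hγM⟩ := hM.2 α hα β hβ v₀ hv₀
  by_cases hvu : u₀ = v₀
  · subst hvu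
    refine ⟨u₀, hu₀, ?_⟩
    have : ({u₀, u₀} : Finset V) = {u₀} := by simp
    rw [flip1, ← this]; exact hγM
  · -- u₀ ≠ v₀
    by_contra hno
    push_neg at hno
    set γ := flipS α {u₀, v₀} with hγdef
    have hu₀S : u₀ ∈ S := by rw [hS, Finset.mem_filter]; exact ⟨Finset.mem_univ _, hu₀⟩
    have hSγ : (Finset.univ.filter fun v => γ v ≠ β v) = S \ {u₀, v₀} := by
      ext x
      by_cases h1 : x = u₀
      · subst h1
        simp only [Finset.mem_filter, Finset.mem_univ, true_and, Finset.mem_sdiff,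
          Finset.mem_insert, Finset.mem_singleton, hγdef, flipS, hS]
        cases hax : α x <;> cases hbx : β x <;> simp_all
      · by_cases h2 : x = v₀
        · subst h2
          simp only [Finset.mem_filter, Finset.mem_univ, true_and, Finset.mem_sdiff,
            Finset.mem_insert, Finset.mem_singleton, hγdef, flipS, hS]
          cases hax : α x <;> cases hbx : β x <;> simp_all
        · have hmem : x ∉ ({u₀, v₀} : Finset V) := by simp [h1, h2]
          simp only [Finset.mem_filter, Finset.mem_univ, true_and, Finset.mem_sdiff,
            Finset.mem_insert, Finset.mem_singleton, hγdef, flipS, hS, if_neg hmem]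
          simp [h1, h2]
    have hsub : ({u₀, v₀} : Finset V) ⊆ S := by
      intro x hx
      rw [Finset.mem_insert, Finset.mem_singleton] at hx
      rcases hx with rfl | rfl
      · exact hu₀S
      · exact hv₀S
    have hpair : ({u₀, v₀} : Finset V).card = 2 := Finset.card_pair hvu
    have hn2 : 2 ≤ n := by
      have := Finset.card_le_card hsub
      rw [hcard, hpair] at this; exact this
    have hcard2 : (Finset.univ.filter fun v => γ v ≠ β v).card = n - 2 := by
      rw [hSγ, Finset.card_sdiff_of_subset hsub, hcard, hpair]
    obtain ⟨w, hwγ, hwM⟩ := ih (n - 2) (by omega) γ β hγM hβ hcard2 (by omega)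
    have hwmem : w ∈ S \ ({u₀, v₀} : Finset V) := by
      rw [← hSγ, Finset.mem_filter]; exact ⟨Finset.mem_univ _, hwγ⟩
    rw [Finset.mem_sdiff, Finset.mem_insert, Finset.mem_singleton] at hwmem
    have hwS : α w ≠ β w := by
      have := hwmem.1; rw [hS, Finset.mem_filter] at this; exact this.2
    push_neg at hwmem
    have hwu : u₀ ≠ w := fun h => hwmem.2.1 h.symm
    have hwv : v₀ ≠ w := fun h => hwmem.2.2 h.symm
    -- memberships in pat form
    have hδ : pat α u₀ v₀ w true true true ∈ M := by
      rw [pat_tttX α u₀ v₀ w hvu hwu hwv]; exact hwM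
    have hγpat : pat α u₀ v₀ w true true false ∈ M := by
      rw [pat_ttfX α u₀ v₀ w hvu hwu hwv]; exact hγM
    have hαpat : pat α u₀ v₀ w false false false ∈ M := by
      rw [pat_fffX]; exact hα
    have hntff : pat α u₀ v₀ w true false false ∉ M := by
      rw [pat_tffX α u₀ v₀ w hvu hwu hwv]; exact hno u₀ hu₀
    have hnftf : pat α u₀ v₀ w false true false ∉ M := by
      rw [pat_ftfX α u₀ v₀ w hvu hwu hwv]; exact hno v₀ hv₀
    have hnfft : pat α u₀ v₀ w false false true ∉ M := by
      rw [pat_fftX α u₀ v₀ w hvu hwu hwv]; exact hno w hwS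
    have hne3 : ∀ x, pat α u₀ v₀ w true true true x ≠ α x → x = u₀ ∨ x = v₀ ∨ x = w := by
      intro x hx
      by_contra hcon
      push_neg at hcon
      apply hx
      simp [pat, hcon.1, hcon.2.1, hcon.2.2]
    have hpu : pat α u₀ v₀ w true true true u₀ ≠ α u₀ := by
      simp [pat]
    have hpv : pat α u₀ v₀ w true true true v₀ ≠ α v₀ := by
      simp [pat, Ne.symm hvu]
    have hF4 : pat α u₀ v₀ w false true true ∈ M := by
      obtain ⟨x, hx, hxM⟩ := hM.2 _ hδ _ hα u₀ hpu
      rcases hne3 x hx with h | h | h <;> rw [h] at hxM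
      · rwa [pat_ftt'X α u₀ v₀ w hvu hwu hwv] at hxM
      · rw [pat_fft'X α u₀ v₀ w hvu hwu hwv] at hxM; exact absurd hxM hnfft
      · rw [pat_ftf'X α u₀ v₀ w hvu hwu hwv] at hxM; exact absurd hxM hnftf
    have hF3 : pat α u₀ v₀ w true false true ∈ M := by
      obtain ⟨x, hx, hxM⟩ := hM.2 _ hδ _ hα v₀ hpv
      rcases hne3 x hx with h | h | h <;> rw [h] at hxM
      · rw [pat_fft''X α u₀ v₀ w hvu hwu hwv] at hxM; exact absurd hxM hnfft
      · rwa [pat_tft'X α u₀ v₀ w hvu hwu hwv] at hxM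
      · rw [pat_tff'X α u₀ v₀ w hvu hwu hwv] at hxM; exact absurd hxM hntff
    have hMI : ∀ a b c : Bool, pat α u₀ v₀ w a b c ∈ M ↔ ![a,b,c] ∈ InterferenceM := by
      intro a b c
      rw [interference_iff]
      cases a <;> cases b <;> cases c <;>
        simp [hαpat, hγpat, hδ, hF3, hF4, hntff, hnftf, hnfft]
    exact absurd hIF (interference_minor M α u₀ v₀ w hvu hwu hwv hMI)

/-- If `M` is an interference-free Δ-matroid and `α, β ∈ M` differ in an odd number of
coordinates, then there is `v ∈ α △ β` with `α ⊕ v ∈ M`. -/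
theorem interferenceFree_odd_flip {V : Type} [Fintype V] [DecidableEq V]
    (M : Set (V → Bool)) (hM : IsDeltaMatroid M) (hIF : InterferenceFree M)
    (α β : V → Bool) (hα : α ∈ M) (hβ : β ∈ M)
    (hodd : (Finset.univ.filter fun v => α v ≠ β v).card % 2 = 1) :
    ∃ v, α v ≠ β v ∧ flip1 α v ∈ M :=
  key M hM hIF _ α β hα hβ rfl hodd
end

section
/- Let M ⊆ {0,1}^V be an interference-free Δ-matroid. If the set Even(M) of all tuples of M with an even number of ones is nonempty, then Even(M) is a Δ-matroid; likewise, if the set Odd(M) of all tuples of M with an odd number of ones is nonempty, then Odd(M) is a Δ-matroid. -/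
set_option linter.unusedSectionVars false
set_option maxHeartbeats 1000000



variable {V : Type*} [DecidableEq V]


/-- difference set of two tuples -/
def diffF [Fintype V] (α β : V → Bool) : Finset V :=
  Finset.univ.filter fun v => α v ≠ β v

lemma mem_diffF [Fintype V] {α β : V → Bool} {v : V} : v ∈ diffF α β ↔ α v ≠ β v := by
  simp [diffF]

lemma flipS_mem {α : V → Bool} {S : Finset V} {v : V} (h : v ∈ S) : flipS α S v = !(α v) := by
  simp [flipS, h]

lemma flipS_notMem {α : V → Bool} {S : Finset V} {v : V} (h : v ∉ S) : flipS α S v = α v := by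
  simp [flipS, h]

lemma flipS_flipS (α : V → Bool) (S T : Finset V) :
    flipS (flipS α S) T = flipS α (symmDiff S T) := by
  funext w
  by_cases hS : w ∈ S <;> by_cases hT : w ∈ T <;>
    simp [flipS, hS, hT, Finset.mem_symmDiff]

lemma diffF_flipS [Fintype V] (α : V → Bool) (S : Finset V) : diffF α (flipS α S) = S := by
  ext w
  by_cases h : w ∈ S <;> simp [mem_diffF, flipS, h]

lemma eq_flipS_diffF [Fintype V] (α β : V → Bool) : β = flipS α (diffF α β) := by
  funext w
  by_cases h : α w = β w
  · rw [flipS_notMem (by simp [mem_diffF, h])]; exact h.symm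
  · rw [flipS_mem (by simp [mem_diffF, h])]
    cases hb : β w <;> cases ha : α w <;> simp_all

lemma ne_flipS_iff {α : V → Bool} {S : Finset V} {v : V} : α v ≠ flipS α S v ↔ v ∈ S := by
  by_cases h : v ∈ S <;> simp [flipS, h]

-- finset helpers
lemma sd_subset {d T : Finset V} (h : T ⊆ d) : symmDiff d T = d \ T := by
  ext w; by_cases hw : w ∈ T
  · simp [Finset.mem_symmDiff, hw, h hw]
  · simp [Finset.mem_symmDiff, hw]

lemma sd_sdiff {d A B : Finset V} (hBA : B ⊆ A) (hB : B ⊆ d) :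
    symmDiff (d \ A) B = d \ (A \ B) := by
  ext w
  by_cases hw : w ∈ B
  · simp [Finset.mem_symmDiff, hw, hBA hw, hB hw]
  · by_cases hwA : w ∈ A <;> simp [Finset.mem_symmDiff, hw, hwA] <;> tauto

lemma bool_ne_eq_not : ∀ (a b : Bool), a ≠ b → a = !b := by decide

lemma flip_ne_flip {α : V → Bool} {S T : Finset V} {u : V} :
    flipS α S u ≠ flipS α T u ↔ u ∈ symmDiff S T := by
  by_cases hS : u ∈ S <;> by_cases hT : u ∈ T <;>
    simp [flipS, hS, hT, Finset.mem_symmDiff]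

lemma diffF_flip_flip [Fintype V] (α : V → Bool) (S T : Finset V) :
    diffF (flipS α S) (flipS α T) = symmDiff S T := by
  ext w
  simp only [diffF, Finset.mem_filter, Finset.mem_univ, true_and]
  exact flip_ne_flip

lemma sd_disjoint' {S T : Finset V} (h : ∀ w ∈ T, w ∉ S) : symmDiff S T = S ∪ T := by
  ext w
  by_cases hw : w ∈ T
  · simp [Finset.mem_symmDiff, hw, h w hw]
  · by_cases hwS : w ∈ S <;> simp [Finset.mem_symmDiff, hw, hwS]

lemma sd_insert {T : Finset V} {v : V} (h : v ∉ T) : symmDiff {v} T = insert v T := by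
  rw [sd_disjoint' (fun w hw => by simp only [Finset.mem_singleton]; rintro rfl; exact h hw)]
  ext w; simp


lemma parity_diffF [Fintype V] (α β : V → Bool) :
    (diffF α β).card % 2 = (numOnes α + numOnes β) % 2 := by
  classical
  set A := Finset.univ.filter (fun v => α v = true) with hA
  set B := Finset.univ.filter (fun v => β v = true) with hB
  have hd : diffF α β = symmDiff A B := by
    ext w
    simp only [diffF, Finset.mem_filter, Finset.mem_univ, true_and, hA, hB,
      Finset.mem_symmDiff]
    cases hx : α w <;> cases hy : β w <;> simp
  have h1 : (symmDiff A B).card = (A \ B).card + (B \ A).card := by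
    show (A \ B ∪ B \ A).card = _
    exact Finset.card_union_of_disjoint disjoint_sdiff_sdiff
  have h2 : (A \ B).card + (A ∩ B).card = A.card := Finset.card_sdiff_add_card_inter A B
  have h3 : (B \ A).card + (B ∩ A).card = B.card := Finset.card_sdiff_add_card_inter B A
  have h4 : (A ∩ B).card = (B ∩ A).card := by rw [Finset.inter_comm]
  have : numOnes α = A.card := rfl
  have : numOnes β = B.card := rfl
  rw [hd, h1]
  omega

lemma sub3 {x y z : V} {T : Finset V} (h : T ⊆ {x,y,z}) :
    T = ∅ ∨ T = {x} ∨ T = {y} ∨ T = {z} ∨ T = {x,y} ∨ T = {x,z} ∨ T = {y,z} ∨ T = {x,y,z} := by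
  have hT : T = ({x,y,z} : Finset V).filter (· ∈ T) := by
    ext w
    simp only [Finset.mem_filter]
    exact ⟨fun hw => ⟨h hw, hw⟩, fun hw => hw.2⟩
  by_cases hx : x ∈ T <;> by_cases hy : y ∈ T <;> by_cases hz : z ∈ T <;>
    rw [hT] <;> simp [Finset.filter_insert, Finset.filter_singleton, hx, hy, hz]

lemma mem_intf (a b c : Bool) : (![a,b,c] ∈ InterferenceM) ↔
    ((a && b) || (a && c) || (b && c) || (!a && !b && !c)) = true := by
  simp only [InterferenceM, Set.mem_insert_iff, Set.mem_singleton_iff]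
  cases a <;> cases b <;> cases c <;> decide

lemma bool_xor_true : ∀ a b : Bool, xor a b = true → a = !b := by decide
lemma bool_xor_false : ∀ a b : Bool, xor a b = false → a = b := by decide

lemma build_interference {V : Type*} [Fintype V] [DecidableEq V] (M : Set (V → Bool))
    (γ : V → Bool) (x y z : V) (hxy : x ≠ y) (hxz : x ≠ z) (hyz : y ≠ z)
    (h0 : γ ∈ M)
    (hfx : flipS γ {x} ∉ M) (hfy : flipS γ {y} ∉ M) (hfz : flipS γ {z} ∉ M)
    (hxyM : flipS γ {x, y} ∈ M) (hxzM : flipS γ {x, z} ∈ M) (hyzM : flipS γ {y, z} ∈ M)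
    (hxyzM : flipS γ {x, y, z} ∈ M) : ¬ InterferenceFree M := by
  intro hIF
  apply hIF
  set D : Finset V := Finset.univ \ {x, y, z} with hD
  have hmemD : ∀ w : V, w ∉ D ↔ (w = x ∨ w = y ∨ w = z) := by
    intro w
    rw [hD]
    simp only [Finset.mem_sdiff, Finset.mem_univ, true_and, not_not, Finset.mem_insert,
      Finset.mem_singleton, not_and]
  have hxD : x ∉ D := (hmemD x).mpr (Or.inl rfl)
  have hyD : y ∉ D := (hmemD y).mpr (Or.inr (Or.inl rfl))
  have hzD : z ∉ D := (hmemD z).mpr (Or.inr (Or.inr rfl))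
  set sx : {w : V // w ∉ D} := ⟨x, hxD⟩ with hsx
  set sy : {w : V // w ∉ D} := ⟨y, hyD⟩ with hsy
  set sz : {w : V // w ∉ D} := ⟨z, hzD⟩ with hsz
  refine ⟨D, γ,
    ⟨![sx, sy, sz],
     (fun w => if w.val = x then 0 else if w.val = y then 1 else 2), ?_, ?_⟩,
    ![γ x, γ y, γ z], ?_⟩
  · intro i
    fin_cases i <;> simp [hsx, hsy, hsz, Ne.symm hxy, Ne.symm hxz, Ne.symm hyz]
  · rintro ⟨w, hw⟩
    rcases (hmemD w).mp hw with rfl | rfl | rfl <;>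
      simp [hsx, hsy, hsz, Ne.symm hxy, Ne.symm hxz, Ne.symm hyz]
  · ext g
    simp only [Equiv.coe_fn_mk, Set.mem_setOf_eq]
    have hfun : (fun i => xor (g (![sx, sy, sz] i)) (![γ x, γ y, γ z] i)) =
        ![xor (g sx) (γ x), xor (g sy) (γ y), xor (g sz) (γ z)] := by
      funext i; fin_cases i <;> rfl
    constructor
    · rintro ⟨m, hmM, hagree, hval⟩
      have hsub : diffF γ m ⊆ {x, y, z} := by
        intro w hw
        rw [mem_diffF] at hw
        by_contra hw3
        simp only [Finset.mem_insert, Finset.mem_singleton] at hw3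
        push_neg at hw3
        exact hw (hagree w (by rw [hD]; simp [hw3.1, hw3.2.1, hw3.2.2])).symm
      have hm : m = flipS γ (diffF γ m) := eq_flipS_diffF γ m
      have hgv : ∀ w : {w : V // w ∉ D}, g w = m w.val := hval
      rw [hfun, hgv sx, hgv sy, hgv sz]
      rcases sub3 hsub with hT|hT|hT|hT|hT|hT|hT|hT <;> rw [hT] at hm
      · rw [hm]
        simp only [hsx, hsy, hsz]
        rw [flipS_notMem (by simp), flipS_notMem (by simp), flipS_notMem (by simp)]
        rw [mem_intf]
        simp
      · exact absurd (hm ▸ hmM) hfx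
      · exact absurd (hm ▸ hmM) hfy
      · exact absurd (hm ▸ hmM) hfz
      · rw [hm]
        simp only [hsx, hsy, hsz]
        rw [flipS_mem (by simp), flipS_mem (by simp),
          flipS_notMem (by simp [Ne.symm hxz, Ne.symm hyz])]
        rw [mem_intf]
        cases γ x <;> cases γ y <;> cases γ z <;> decide
      · rw [hm]
        simp only [hsx, hsy, hsz]
        rw [flipS_mem (by simp), flipS_notMem (by simp [Ne.symm hxy, hyz]),
          flipS_mem (by simp)]
        rw [mem_intf]
        cases γ x <;> cases γ y <;> cases γ z <;> decide
      · rw [hm]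
        simp only [hsx, hsy, hsz]
        rw [flipS_notMem (by simp [hxy, hxz]), flipS_mem (by simp), flipS_mem (by simp)]
        rw [mem_intf]
        cases γ x <;> cases γ y <;> cases γ z <;> decide
      · rw [hm]
        simp only [hsx, hsy, hsz]
        rw [flipS_mem (by simp), flipS_mem (by simp), flipS_mem (by simp)]
        rw [mem_intf]
        cases γ x <;> cases γ y <;> cases γ z <;> decide
    · intro hg
      rw [hfun] at hg
      rw [mem_intf] at hg
      have mk : ∀ T : Finset V, flipS γ T ∈ M → T ⊆ {x, y, z} →
          g sx = flipS γ T x → g sy = flipS γ T y → g sz = flipS γ T z →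
          ∃ m ∈ M, (∀ w ∈ D, m w = γ w) ∧ ∀ w : {w : V // w ∉ D}, g w = m w.val := by
        intro T hTM hsubT g0 g1 g2
        refine ⟨flipS γ T, hTM, fun w hw => flipS_notMem fun hwT => ?_, fun w => ?_⟩
        · exact (Finset.mem_sdiff.mp (hD ▸ hw)).2 (hsubT hwT)
        · obtain ⟨w, hw⟩ := w
          rcases (hmemD w).mp hw with rfl | rfl | rfl
          · rw [show (⟨w, hw⟩ : {w : V // w ∉ D}) = sx from Subtype.ext rfl]; exact g0
          · rw [show (⟨w, hw⟩ : {w : V // w ∉ D}) = sy from Subtype.ext rfl]; exact g1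
          · rw [show (⟨w, hw⟩ : {w : V // w ∉ D}) = sz from Subtype.ext rfl]; exact g2
      cases hgx : xor (g sx) (γ x) <;> cases hgy : xor (g sy) (γ y) <;>
        cases hgz : xor (g sz) (γ z) <;> rw [hgx, hgy, hgz] at hg <;>
        [skip; skip; skip; skip; skip; skip; skip; skip] <;> first
      | exact absurd hg (by decide)
      | (refine mk ∅ h0 (by simp) ?_ ?_ ?_ <;>
          rw [flipS_notMem (by simp)] <;>
          [exact bool_xor_false _ _ hgx; exact bool_xor_false _ _ hgy;
           exact bool_xor_false _ _ hgz])
      | (refine mk {x,y} hxyM (by intro w hw; simp at hw ⊢; tauto) ?_ ?_ ?_ <;>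
          [rw [flipS_mem (by simp)]; rw [flipS_mem (by simp)];
           rw [flipS_notMem (by simp [Ne.symm hxz, Ne.symm hyz])]] <;>
          [exact bool_xor_true _ _ hgx; exact bool_xor_true _ _ hgy;
           exact bool_xor_false _ _ hgz])
      | (refine mk {x,z} hxzM (by intro w hw; simp at hw ⊢; tauto) ?_ ?_ ?_ <;>
          [rw [flipS_mem (by simp)];
           rw [flipS_notMem (by simp [Ne.symm hxy, hyz])];
           rw [flipS_mem (by simp)]] <;>
          [exact bool_xor_true _ _ hgx; exact bool_xor_false _ _ hgy;
           exact bool_xor_true _ _ hgz])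
      | (refine mk {y,z} hyzM (by intro w hw; simp at hw ⊢; tauto) ?_ ?_ ?_ <;>
          [rw [flipS_notMem (by simp [hxy, hxz])];
           rw [flipS_mem (by simp)]; rw [flipS_mem (by simp)]] <;>
          [exact bool_xor_false _ _ hgx; exact bool_xor_true _ _ hgy;
           exact bool_xor_true _ _ hgz])
      | (refine mk {x,y,z} hxyzM (by intro w hw; simp at hw ⊢; tauto) ?_ ?_ ?_ <;>
          [rw [flipS_mem (by simp)]; rw [flipS_mem (by simp)];
           rw [flipS_mem (by simp)]] <;>
          [exact bool_xor_true _ _ hgx; exact bool_xor_true _ _ hgy;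
           exact bool_xor_true _ _ hgz])

section MainInduction

variable {V : Type*} [Fintype V] [DecidableEq V]

lemma main_lemma {M : Set (V → Bool)} (hM : IsDeltaMatroid M) (hIF : InterferenceFree M) :
    ∀ n : ℕ, ∀ α, α ∈ M → ∀ β, β ∈ M → (diffF α β).card = n → n % 2 = 0 →
      ∀ v, α v ≠ β v → ∃ u, u ≠ v ∧ α u ≠ β u ∧ flipS α {u, v} ∈ M := by
  intro n
  induction n using Nat.strong_induction_on with
  | _ n IH =>
  intro α hα β hβ hcard hpar v hv
  have hvd : v ∈ diffF α β := mem_diffF.mpr hv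
  set d := diffF α β with hd
  have hβd : β = flipS α d := eq_flipS_diffF α β
  have hn2 : 2 ≤ n := by
    have : 0 < n := hcard ▸ Finset.card_pos.mpr ⟨v, hvd⟩
    omega
  by_cases hn : n = 2
  · -- base case |d| = 2
    obtain ⟨a, b, hab, habd⟩ := Finset.card_eq_two.mp (by rw [hcard, hn])
    have hvab : v = a ∨ v = b := by
      have := habd ▸ hvd; simpa using this
    rcases hvab with rfl | rfl
    · refine ⟨b, hab.symm, mem_diffF.mp (by rw [← hd, habd]; simp), ?_⟩
      rw [Finset.pair_comm, ← habd, ← hβd]; exact hβ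
    · refine ⟨a, hab, mem_diffF.mp (by rw [← hd, habd]; simp), ?_⟩
      rw [← habd, ← hβd]; exact hβ
  -- inductive bad case
  by_contra hcon
  push_neg at hcon
  have bad : ∀ u, u ∈ d → u ≠ v → flipS α {u, v} ∉ M := fun u hu hne =>
    hcon u hne (mem_diffF.mp hu)
  have hn4 : 4 ≤ n := by omega
  -- Step 1 : flipS α {v} ∈ M
  have step1 : flipS α {v} ∈ M := by
    obtain ⟨u, hu1, hu2⟩ := hM.2 α hα β hβ v hv
    by_cases huv : u = v
    · rw [huv, show ({v, v} : Finset V) = {v} by simp] at hu2; exact hu2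
    · exact absurd hu2 (bad u (mem_diffF.mpr hu1) huv)
  -- star : no middle even flips containing v
  have star : ∀ S : Finset V, S ⊆ d → v ∈ S → S.card < n → S.card % 2 = 0 →
      flipS α S ∉ M := by
    intro S hSd hvS hSn hSpar hSM
    obtain ⟨u, hune, hu1, hu2⟩ := IH S.card hSn α hα (flipS α S) hSM
      (by rw [diffF_flipS]) hSpar v (ne_flipS_iff.mpr hvS)
    exact bad u (hSd (ne_flipS_iff.mp hu1)) hune hu2
  -- Step 4d : flipS α (d \ {w}) ∈ M for all w ∈ d, w ≠ v
  have hvsub : ({v} : Finset V) ⊆ d := Finset.singleton_subset_iff.mpr hvd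
  have step4d : ∀ w, w ∈ d → w ≠ v → flipS α (d \ {w}) ∈ M := by
    intro w hw hwv
    have hne : β w ≠ flipS α {v} w := by
      rw [hβd, flip_ne_flip, sd_subset hvsub]
      exact Finset.mem_sdiff.mpr ⟨hw, by simp [hwv]⟩
    obtain ⟨s, hs1, hs2⟩ := hM.2 β hβ (flipS α {v}) step1 w hne
    have hsd : s ∈ d \ {v} := by
      rw [hβd, flip_ne_flip, sd_subset hvsub] at hs1; exact hs1
    rw [Finset.mem_sdiff, Finset.mem_singleton] at hsd
    by_cases hsw : s = w
    · rw [hsw, show ({w, w} : Finset V) = {w} by simp, hβd, flipS_flipS,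
        sd_subset (Finset.singleton_subset_iff.mpr hw)] at hs2
      exact hs2
    · exfalso
      have hpsub : ({s, w} : Finset V) ⊆ d := by
        intro u hu; simp at hu; rcases hu with rfl | rfl; exacts [hsd.1, hw]
      rw [hβd, flipS_flipS, sd_subset hpsub] at hs2
      have hcd : (d \ {s, w}).card = n - 2 := by
        rw [Finset.card_sdiff_of_subset hpsub, Finset.card_pair hsw, hcard]
      refine star (d \ {s, w}) (Finset.sdiff_subset) ?_ (by omega) (by omega) hs2
      exact Finset.mem_sdiff.mpr ⟨hvd, by simp [Ne.symm hsd.2, Ne.symm hwv]⟩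
  by_cases hn6 : n = 4
  · -- |d| = 4 : build interference around flipS α {v}
    have hc3 : (d \ {v}).card = 3 := by
      rw [Finset.card_sdiff_of_subset hvsub, hcard, hn6, Finset.card_singleton]
    obtain ⟨x, y, z, hxy, hxz, hyz, hxyz⟩ := Finset.card_eq_three.mp hc3
    have hxd : x ∈ d ∧ x ≠ v := by
      have : x ∈ d \ {v} := by rw [hxyz]; simp
      simpa using this
    have hyd : y ∈ d ∧ y ≠ v := by
      have : y ∈ d \ {v} := by rw [hxyz]; simp
      simpa using this
    have hzd : z ∈ d ∧ z ≠ v := by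
      have : z ∈ d \ {v} := by rw [hxyz]; simp
      simpa using this
    have hdeq : d = insert v ({x, y, z} : Finset V) := by
      ext w
      constructor
      · intro hwd
        by_cases hwv : w = v
        · simp [hwv]
        · have : w ∈ d \ {v} := Finset.mem_sdiff.mpr ⟨hwd, by simp [hwv]⟩
          rw [hxyz] at this
          simp at this ⊢
          tauto
      · intro hw
        simp at hw
        rcases hw with rfl | hw
        · exact hvd
        · have : w ∈ d \ {v} := by rw [hxyz]; simpa using hw
          exact (Finset.mem_sdiff.mp this).1
    refine absurd hIF (build_interference M (flipS α {v}) x y z hxy hxz hyz step1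
      ?_ ?_ ?_ ?_ ?_ ?_ ?_)
    · rw [flipS_flipS, symmDiff_comm, sd_insert (by simp [hxd.2])]
      exact bad x hxd.1 hxd.2
    · rw [flipS_flipS, symmDiff_comm, sd_insert (by simp [hyd.2])]
      exact bad y hyd.1 hyd.2
    · rw [flipS_flipS, symmDiff_comm, sd_insert (by simp [hzd.2])]
      exact bad z hzd.1 hzd.2
    · rw [flipS_flipS, sd_insert (by simp [Ne.symm hxd.2, Ne.symm hyd.2])]
      rw [show insert v ({x, y} : Finset V) = d \ {z} by
        rw [hdeq]; ext w; simp; constructor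
        · rintro (rfl | rfl | rfl) <;> simp [Ne.symm hzd.2, hxz, hyz] <;> tauto
        · tauto]
      exact step4d z hzd.1 hzd.2
    · rw [flipS_flipS, sd_insert (by simp [Ne.symm hxd.2, Ne.symm hzd.2])]
      rw [show insert v ({x, z} : Finset V) = d \ {y} by
        rw [hdeq]; ext w; simp; constructor
        · rintro (rfl | rfl | rfl) <;> simp [Ne.symm hyd.2, hxy, Ne.symm hyz] <;> tauto
        · tauto]
      exact step4d y hyd.1 hyd.2
    · rw [flipS_flipS, sd_insert (by simp [Ne.symm hyd.2, Ne.symm hzd.2])]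
      rw [show insert v ({y, z} : Finset V) = d \ {x} by
        rw [hdeq]; ext w; simp; constructor
        · rintro (rfl | rfl | rfl) <;> simp [Ne.symm hxd.2, Ne.symm hxy, Ne.symm hxz] <;> tauto
        · tauto]
      exact step4d x hxd.1 hxd.2
    · rw [flipS_flipS, sd_insert (by simp [Ne.symm hxd.2, Ne.symm hyd.2, Ne.symm hzd.2]),
        ← hdeq, ← hβd]
      exact hβ
  · -- |d| ≥ 6
    have hn6' : 6 ≤ n := by omega
    -- pair2 : no flips of two non-v elements of d
    have pair2 : ∀ s t, s ∈ d → t ∈ d → s ≠ v → t ≠ v → s ≠ t →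
        flipS α {s, t} ∉ M := by
      intro s t hs ht hsv htv hst hstM
      have hpsub : ({s, t} : Finset V) ⊆ d := by
        intro u hu; simp at hu; rcases hu with rfl | rfl; exacts [hs, ht]
      have hdiff : diffF (flipS α {s, t}) β = d \ {s, t} := by
        rw [hβd, diffF_flip_flip, symmDiff_comm, sd_subset hpsub]
      have hcd : (d \ {s, t}).card = n - 2 := by
        rw [Finset.card_sdiff_of_subset hpsub, Finset.card_pair hst, hcard]
      have hvne : flipS α {s, t} v ≠ β v := by
        rw [flipS_notMem (by simp [Ne.symm hsv, Ne.symm htv] : v ∉ ({s, t} : Finset V))]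
        exact hv
      obtain ⟨u, hune, hu1, hu2⟩ := IH (n - 2) (by omega) (flipS α {s, t}) hstM β hβ
        (by rw [hdiff, hcd]) (by omega) v hvne
      have hud : u ∈ d \ {s, t} := by rw [← hdiff]; exact mem_diffF.mpr hu1
      rw [Finset.mem_sdiff, Finset.mem_insert, Finset.mem_singleton] at hud
      push_neg at hud
      rw [flipS_flipS, sd_disjoint' (by
        intro w hw; simp at hw ⊢
        rcases hw with rfl | rfl
        · exact ⟨hud.2.1, hud.2.2⟩
        · exact ⟨Ne.symm hsv, Ne.symm htv⟩)] at hu2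
      have hcard4 : (({s, t} : Finset V) ∪ {u, v}).card = 4 := by
        rw [Finset.card_union_of_disjoint (by
          rw [Finset.disjoint_left]
          intro w hw hw2; simp at hw hw2
          rcases hw with rfl | rfl
          · rcases hw2 with rfl | rfl; exacts [hud.2.1 rfl, hsv rfl]
          · rcases hw2 with rfl | rfl; exacts [hud.2.2 rfl, htv rfl]),
          Finset.card_pair hst, Finset.card_pair hune]
      refine star (({s, t} : Finset V) ∪ {u, v}) ?_ (by simp) (by omega) (by omega) hu2
      intro w hw
      simp only [Finset.mem_union, Finset.mem_insert, Finset.mem_singleton] at hw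
      rcases hw with (rfl | rfl) | (rfl | rfl)
      exacts [hs, ht, hud.1, hvd]
    -- step4a : flipS α (d \ {v, t}) ∉ M
    have step4a : ∀ t, t ∈ d → t ≠ v → flipS α (d \ {v, t}) ∉ M := by
      intro t ht htv hmem
      have hpsub : ({v, t} : Finset V) ⊆ d := by
        intro u hu; simp at hu; rcases hu with rfl | rfl; exacts [hvd, ht]
      have hcd : (d \ {v, t}).card = n - 2 := by
        rw [Finset.card_sdiff_of_subset hpsub, Finset.card_pair (Ne.symm htv), hcard]
      have hne : (d \ {v, t}).Nonempty := Finset.card_pos.mp (by omega)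
      obtain ⟨c, hc2⟩ := hne
      obtain ⟨u, hune, hu1, hu2⟩ := IH (n - 2) (by omega) α hα (flipS α (d \ {v, t}))
        hmem (by rw [diffF_flipS, hcd]) (by omega) c (ne_flipS_iff.mpr hc2)
      have hud : u ∈ d \ {v, t} := ne_flipS_iff.mp hu1
      rw [Finset.mem_sdiff, Finset.mem_insert, Finset.mem_singleton] at hud
      rw [Finset.mem_sdiff, Finset.mem_insert, Finset.mem_singleton] at hc2
      push_neg at hud hc2
      exact pair2 u c hud.1 hc2.1 hud.2.1 hc2.2.1 hune hu2
    -- step4b : flipS α (d \ {v}) ∈ M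
    have step4b : flipS α (d \ {v}) ∈ M := by
      obtain ⟨u, hu1, hu2⟩ := hM.2 β hβ α hα v hv.symm
      have hud : u ∈ d := mem_diffF.mpr (Ne.symm hu1)
      by_cases huv : u = v
      · rw [huv, show ({v, v} : Finset V) = {v} by simp, hβd, flipS_flipS,
          sd_subset hvsub] at hu2
        exact hu2
      · exfalso
        have hpsub : ({u, v} : Finset V) ⊆ d := by
          intro w hw; simp at hw; rcases hw with rfl | rfl; exacts [hud, hvd]
        rw [hβd, flipS_flipS, sd_subset hpsub] at hu2
        rw [Finset.pair_comm u v] at hu2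
        exact step4a u hud huv hu2
    -- step4c : find w1 w2 with flipS α (d \ {v, w2, w1}) ∈ M
    have hdvne : (d \ {v}).Nonempty := by
      apply Finset.card_pos.mp
      rw [Finset.card_sdiff_of_subset hvsub, hcard]
      simp; omega
    obtain ⟨w1, hw1⟩ := hdvne
    have hw1' : w1 ∈ d ∧ w1 ≠ v := by simpa using hw1
    have hne1 : flipS α (d \ {v}) w1 ≠ α w1 :=
      Ne.symm (ne_flipS_iff.mpr (by simpa using hw1))
    obtain ⟨w2, ht1, ht2⟩ := hM.2 (flipS α (d \ {v})) step4b α hα w1 hne1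
    have hw2 : w2 ∈ d \ {v} := ne_flipS_iff.mp (Ne.symm ht1)
    have hw2' : w2 ∈ d ∧ w2 ≠ v := by simpa using hw2
    by_cases hww : w2 = w1
    · rw [hww, show ({w1, w1} : Finset V) = {w1} by simp, flipS_flipS,
        sd_subset (Finset.singleton_subset_iff.mpr (show w1 ∈ d \ {v} by simpa using hw1)),
        show (d \ {v}) \ {w1} = d \ {v, w1} by ext w; simp; tauto] at ht2
      exact step4a w1 hw1'.1 hw1'.2 ht2
    · rw [flipS_flipS, sd_subset (by
        intro w hw; simp at hw; rcases hw with rfl | rfl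
        exacts [hw2, hw1]),
        show (d \ {v}) \ {w2, w1} = d \ {v, w2, w1} by ext w; simp; tauto] at ht2
      -- now build interference around flipS α (d \ {v, w2, w1})
      have hAsub : ({v, w2, w1} : Finset V) ⊆ d := by
        intro w hw; simp at hw
        rcases hw with rfl | rfl | rfl; exacts [hvd, hw2'.1, hw1'.1]
      have flipbase : ∀ B : Finset V, B ⊆ ({v, w2, w1} : Finset V) →
          flipS (flipS α (d \ {v, w2, w1})) B = flipS α (d \ (({v, w2, w1} : Finset V) \ B)) := by
        intro B hB
        rw [flipS_flipS, sd_sdiff hB (hB.trans hAsub)]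
      refine absurd hIF (build_interference M (flipS α (d \ {v, w2, w1})) v w2 w1
        (Ne.symm hw2'.2) (Ne.symm hw1'.2) hww ht2 ?_ ?_ ?_ ?_ ?_ ?_ ?_)
      · rw [flipbase {v} (by simp),
          show ({v, w2, w1} : Finset V) \ {v} = {w2, w1} by
            ext w
            simp only [Finset.mem_sdiff, Finset.mem_insert, Finset.mem_singleton]
            constructor
            · rintro ⟨rfl | rfl | rfl, h2⟩
              · exact absurd rfl h2
              · exact Or.inl rfl
              · exact Or.inr rfl
            · rintro (rfl | rfl)
              · exact ⟨Or.inr (Or.inl rfl), hw2'.2⟩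
              · exact ⟨Or.inr (Or.inr rfl), hw1'.2⟩]
        refine star (d \ {w2, w1}) Finset.sdiff_subset ?_ ?_ ?_
        · exact Finset.mem_sdiff.mpr ⟨hvd, by simp [Ne.symm hw2'.2, Ne.symm hw1'.2]⟩
        · have hpsub2 : ({w2, w1} : Finset V) ⊆ d := by
            intro w hw; simp at hw; rcases hw with rfl | rfl; exacts [hw2'.1, hw1'.1]
          rw [Finset.card_sdiff_of_subset hpsub2, Finset.card_pair hww, hcard]; omega
        · have hpsub2 : ({w2, w1} : Finset V) ⊆ d := by
            intro w hw; simp at hw; rcases hw with rfl | rfl; exacts [hw2'.1, hw1'.1]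
          rw [Finset.card_sdiff_of_subset hpsub2, Finset.card_pair hww, hcard]; omega
      · rw [flipbase {w2} (by simp),
          show ({v, w2, w1} : Finset V) \ {w2} = {v, w1} by
            ext w
            simp only [Finset.mem_sdiff, Finset.mem_insert, Finset.mem_singleton]
            constructor
            · rintro ⟨rfl | rfl | rfl, h2⟩
              · exact Or.inl rfl
              · exact absurd rfl h2
              · exact Or.inr rfl
            · rintro (rfl | rfl)
              · exact ⟨Or.inl rfl, Ne.symm hw2'.2⟩
              · exact ⟨Or.inr (Or.inr rfl), fun h => hww h.symm⟩]
        exact step4a w1 hw1'.1 hw1'.2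
      · rw [flipbase {w1} (by simp),
          show ({v, w2, w1} : Finset V) \ {w1} = {v, w2} by
            ext w
            simp only [Finset.mem_sdiff, Finset.mem_insert, Finset.mem_singleton]
            constructor
            · rintro ⟨rfl | rfl | rfl, h2⟩
              · exact Or.inl rfl
              · exact Or.inr rfl
              · exact absurd rfl h2
            · rintro (rfl | rfl)
              · exact ⟨Or.inl rfl, Ne.symm hw1'.2⟩
              · exact ⟨Or.inr (Or.inl rfl), hww⟩]
        exact step4a w2 hw2'.1 hw2'.2
      · rw [flipbase {v, w2} (by intro w hw; simp at hw ⊢; tauto),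
          show ({v, w2, w1} : Finset V) \ {v, w2} = {w1} by
            ext w
            simp only [Finset.mem_sdiff, Finset.mem_insert, Finset.mem_singleton]
            constructor
            · rintro ⟨rfl | rfl | rfl, h2⟩
              · exact absurd (Or.inl rfl) h2
              · exact absurd (Or.inr rfl) h2
              · rfl
            · rintro rfl
              exact ⟨Or.inr (Or.inr rfl), fun h => h.elim (fun h => hw1'.2 h) (fun h => hww h.symm)⟩]
        exact step4d w1 hw1'.1 hw1'.2
      · rw [flipbase {v, w1} (by intro w hw; simp at hw ⊢; tauto),
          show ({v, w2, w1} : Finset V) \ {v, w1} = {w2} by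
            ext w
            simp only [Finset.mem_sdiff, Finset.mem_insert, Finset.mem_singleton]
            constructor
            · rintro ⟨rfl | rfl | rfl, h2⟩
              · exact absurd (Or.inl rfl) h2
              · rfl
              · exact absurd (Or.inr rfl) h2
            · rintro rfl
              exact ⟨Or.inr (Or.inl rfl), fun h => h.elim (fun h => hw2'.2 h) (fun h => hww h)⟩]
        exact step4d w2 hw2'.1 hw2'.2
      · rw [flipbase {w2, w1} (by intro w hw; simp at hw ⊢; tauto),
          show ({v, w2, w1} : Finset V) \ {w2, w1} = {v} by
            ext w
            simp only [Finset.mem_sdiff, Finset.mem_insert, Finset.mem_singleton]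
            constructor
            · rintro ⟨rfl | rfl | rfl, h2⟩
              · rfl
              · exact absurd (Or.inl rfl) h2
              · exact absurd (Or.inr rfl) h2
            · rintro rfl
              exact ⟨Or.inl rfl, fun h => h.elim (fun h => hw2'.2 h.symm) (fun h => hw1'.2 h.symm)⟩]
        exact step4b
      · rw [flipbase {v, w2, w1} (by intro w hw; exact hw),
          Finset.sdiff_self, Finset.sdiff_empty, ← hβd]
        exact hβ

end MainInduction

lemma part_deltaMatroid {V : Type} [Fintype V] [DecidableEq V]
    (M : Set (V → Bool)) (hM : IsDeltaMatroid M) (hIF : InterferenceFree M) (c : ℕ)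
    (hne : ({γ ∈ M | numOnes γ % 2 = c}).Nonempty) :
    IsDeltaMatroid {γ ∈ M | numOnes γ % 2 = c} := by
  refine ⟨hne, ?_⟩
  rintro α ⟨hα, hα2⟩ β ⟨hβ, hβ2⟩ v hv
  have hpd := parity_diffF α β
  have hpar : (diffF α β).card % 2 = 0 := by omega
  obtain ⟨u, hune, hu1, hu2⟩ := main_lemma hM hIF (diffF α β).card α hα β hβ rfl hpar v hv
  refine ⟨u, hu1, hu2, ?_⟩
  have h2 : (diffF α (flipS α {u, v})).card = 2 := by
    rw [diffF_flipS]; exact Finset.card_pair hune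
  have hp2 := parity_diffF α (flipS α {u, v})
  rw [h2] at hp2
  omega


/-- For an interference-free Δ-matroid `M`, if the set of even tuples of `M` is
nonempty then it is a Δ-matroid, and likewise for the set of odd tuples of `M`. -/
theorem interferenceFree_even_odd_deltaMatroid {V : Type} [Fintype V] [DecidableEq V]
    (M : Set (V → Bool)) (hM : IsDeltaMatroid M) (hIF : InterferenceFree M) :
    ({γ ∈ M | numOnes γ % 2 = 0}.Nonempty → IsDeltaMatroid {γ ∈ M | numOnes γ % 2 = 0}) ∧
    ({γ ∈ M | numOnes γ % 2 = 1}.Nonempty → IsDeltaMatroid {γ ∈ M | numOnes γ % 2 = 1}) := by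
  exact ⟨part_deltaMatroid M hM hIF 0, part_deltaMatroid M hM hIF 1⟩
end
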